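/- Let V = {v₁,...,v_n} be nonzero vectors spanning ℝ^r. Define χ on oriented (r-1)-simplices over {1,...,n} by χ([x₁,...,x_r]) = sign of det(φ(x₁),...,φ(x_r)), where φ(e) = v_e and φ(ē) = -v_e. Then χ satisfies the chirotope axioms (C1)-(C4). -/

import Mathlib

/-- The bar involution on signed indices: `(e, b) ↦ (e, ¬b)`. -/
def bar {α : Type*} (x : α × Bool) : α × Bool := (x.1, !x.2)

/-- A chirotope of rank `r` over `α`: a map from `r`-tuples of signed indices
(oriented `(r-1)`-simplices) to `{-1,0,+1}` satisfying axioms (C1)–(C4). -/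
structure IsChirotope (r : ℕ) (α : Type*) (χ : (Fin r → α × Bool) → ℤ) : Prop where
  rpos : 0 < r
  values : ∀ σ : Fin r → α × Bool, χ σ = -1 ∨ χ σ = 0 ∨ χ σ = 1
  degenerate : ∀ σ : Fin r → α × Bool,
      ¬ Function.Injective (fun i => (σ i).1) → χ σ = 0
  c1 : ∀ e : α, ∃ τ : Fin r → α, (∃ i, τ i = e) ∧ χ (fun i => (τ i, true)) ≠ 0
  c2neg : ∀ (σ : Fin r → α × Bool) (i : Fin r), i.val = r - 1 →
      χ (Function.update σ i (bar (σ i))) = - χ σ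
  c2swap : ∀ (σ : Fin r → α × Bool) (i j : Fin r), j.val = i.val + 1 →
      χ (fun m => if m = i then bar (σ j) else if m = j then σ i else σ m) = χ σ
  c3 : ∀ σ τ : Fin r → α × Bool, χ σ ≠ 0 → χ τ ≠ 0 →
      ∃ i, χ (Function.update σ ⟨r - 1, Nat.sub_lt rpos one_pos⟩ (τ i)) ≠ 0
  c4 : ∀ (σ : Fin r → α × Bool) (y₁ y₂ : α × Bool),
      0 ≤ χ (Function.update σ ⟨r - 2, Nat.sub_lt rpos two_pos⟩ y₁) *
          χ (Function.update σ ⟨r - 1, Nat.sub_lt rpos one_pos⟩ y₂) →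
      0 ≤ χ (Function.update σ ⟨r - 2, Nat.sub_lt rpos two_pos⟩ y₂) *
          χ (Function.update σ ⟨r - 1, Nat.sub_lt rpos one_pos⟩ (bar y₁)) →
      0 ≤ χ σ *
          χ (Function.update (Function.update σ ⟨r - 2, Nat.sub_lt rpos two_pos⟩ y₁)
              ⟨r - 1, Nat.sub_lt rpos one_pos⟩ y₂)

open Function Matrix

/-- The sign of a real number, valued in `ℤ`. -/
private noncomputable def sgn (d : ℝ) : ℤ := if 0 < d then 1 else if d < 0 then -1 else 0

private theorem sgn_of_pos {a : ℝ} (h : 0 < a) : sgn a = 1 := if_pos h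

private theorem sgn_of_neg {a : ℝ} (h : a < 0) : sgn a = -1 := by
  unfold sgn; rw [if_neg (by linarith), if_pos h]

private theorem sgn_of_zero {a : ℝ} (h : a = 0) : sgn a = 0 := by
  unfold sgn; rw [if_neg (by simp [h]), if_neg (by simp [h])]

private theorem sgn_eq_zero_iff {d : ℝ} : sgn d = 0 ↔ d = 0 := by
  rcases lt_trichotomy 0 d with h | h | h
  · rw [sgn_of_pos h]
    constructor <;> intro h2
    · exact absurd h2 (by norm_num)
    · linarith
  · rw [sgn_of_zero h.symm]; exact ⟨fun _ => h.symm, fun _ => rfl⟩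
  · rw [sgn_of_neg h]
    constructor <;> intro h2
    · exact absurd h2 (by norm_num)
    · linarith

private theorem sgn_neg (d : ℝ) : sgn (-d) = - sgn d := by
  rcases lt_trichotomy 0 d with h | h | h
  · rw [sgn_of_pos h, sgn_of_neg (by linarith : -d < 0)]
  · rw [sgn_of_zero h.symm, sgn_of_zero (by rw [← h, neg_zero])]; rfl
  · rw [sgn_of_neg h, sgn_of_pos (by linarith : (0:ℝ) < -d)]; rfl

private theorem sgn_mul_nonneg {a b : ℝ} : 0 ≤ sgn a * sgn b ↔ 0 ≤ a * b := by
  rcases lt_trichotomy 0 a with ha | ha | ha <;> rcases lt_trichotomy 0 b with hb | hb | hb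
  · simp only [sgn_of_pos ha, sgn_of_pos hb]
    norm_num
    exact le_of_lt (mul_pos ha hb)
  · rw [sgn_of_zero hb.symm]; simp [← hb]
  · simp only [sgn_of_pos ha, sgn_of_neg hb]
    norm_num
    exact mul_neg_of_pos_of_neg ha hb
  · rw [sgn_of_zero ha.symm]; simp [← ha]
  · rw [sgn_of_zero ha.symm]; simp [← ha]
  · rw [sgn_of_zero ha.symm]; simp [← ha]
  · simp only [sgn_of_neg ha, sgn_of_pos hb]
    norm_num
    exact mul_neg_of_neg_of_pos ha hb
  · rw [sgn_of_zero hb.symm]; simp [← hb]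
  · simp only [sgn_of_neg ha, sgn_of_neg hb]
    norm_num
    exact le_of_lt (mul_pos_of_neg_of_neg ha hb)

/-- `φ` : the signed vector associated to a signed index. -/
private def phi {r n : ℕ} (v : Fin n → Fin r → ℝ) (x : Fin n × Bool) : Fin r → ℝ :=
  if x.2 then v x.1 else -(v x.1)

private theorem phi_bar {r n : ℕ} (v : Fin n → Fin r → ℝ) (x : Fin n × Bool) :
    phi v (bar x) = - phi v x := by
  rcases x with ⟨e, b⟩; cases b <;> simp [phi, bar]

/-- The determinant-sign map of a spanning configuration of nonzero
vectors `v₁,…,v_n` in `ℝ^r` (with `φ(e) = v_e`, `φ(ē) = -v_e`) is a chirotope. -/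
theorem det_sign_isChirotope (r n : ℕ) (hr : 0 < r)
    (v : Fin n → Fin r → ℝ) (hv : ∀ i, v i ≠ 0)
    (hspan : Submodule.span ℝ (Set.range v) = ⊤) :
    IsChirotope r (Fin n) (fun σ =>
      let d := Matrix.det (Matrix.of fun i j : Fin r =>
        if (σ j).2 then v (σ j).1 i else -(v (σ j).1 i))
      if 0 < d then 1 else if d < 0 then -1 else 0) := by
  set F : ((Fin r → ℝ) [⋀^Fin r]→ₗ[ℝ] ℝ) := Matrix.detRowAlternating with hFdef
  set w : (Fin r → Fin n × Bool) → Fin r → Fin r → ℝ := fun σ j => phi v (σ j) with hw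
  have hdet : ∀ σ : Fin r → Fin n × Bool,
      Matrix.det (Matrix.of fun i j : Fin r =>
        if (σ j).2 then v (σ j).1 i else -(v (σ j).1 i)) = F (w σ) := by
    intro σ
    have h1 : (Matrix.of fun i j : Fin r =>
        if (σ j).2 then v (σ j).1 i else -(v (σ j).1 i)) = (Matrix.of (w σ))ᵀ := by
      ext i j
      simp only [Matrix.of_apply, Matrix.transpose_apply, hw, phi]
      split <;> simp
    rw [h1, Matrix.det_transpose]
    rfl
  -- the rows of an updated tuple
  have hupd : ∀ (σ : Fin r → Fin n × Bool) (k : Fin r) (x : Fin n × Bool),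
      w (Function.update σ k x) = Function.update (w σ) k (phi v x) := by
    intro σ k x
    funext j
    by_cases hj : j = k
    · subst hj; simp [hw]
    · simp [hw, Function.update_of_ne hj]
  have hFmat : ∀ X : Fin r → Fin r → ℝ, F X = Matrix.det (Matrix.of X) := fun _ => rfl
  -- negating one row negates F
  have hFneg : ∀ (X : Fin r → Fin r → ℝ) (k : Fin r) (z : Fin r → ℝ),
      F (Function.update X k (-z)) = - F (Function.update X k z) := by
    intro X k z
    have := F.map_update_smul X k (-1 : ℝ) z
    rw [neg_one_smul] at this
    rw [this, smul_eq_mul]; ring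
  -- expansion of one slot: if `z = ∑ cz m • u m` then `F (update X k z) = ∑ cz m * F (update X k (u m))`
  have hFexp : ∀ (X : Fin r → Fin r → ℝ) (k : Fin r) (z cz : Fin r → ℝ)
      (u : Fin r → Fin r → ℝ), z = ∑ m, cz m • u m →
      F (Function.update X k z) = ∑ m, cz m * F (Function.update X k (u m)) := by
    intro X k z cz u hz
    rw [hz, F.map_update_sum]
    refine Finset.sum_congr rfl fun m _ => ?_
    rw [F.map_update_smul, smul_eq_mul]
  -- solving a vector in terms of the rows of a matrix with nonzero determinant
  have hsolve : ∀ u : Fin r → Fin r → ℝ, F u ≠ 0 → ∀ z : Fin r → ℝ,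
      ∃ cz : Fin r → ℝ, z = ∑ m, cz m • u m := by
    intro u hu z
    have hU : IsUnit (Matrix.of u) := by
      rw [Matrix.isUnit_iff_isUnit_det, isUnit_iff_ne_zero]
      rw [hFmat] at hu; exact hu
    obtain ⟨cz, hcz⟩ := Matrix.vecMul_surjective_iff_isUnit.2 hU z
    refine ⟨cz, ?_⟩
    funext j
    rw [← hcz]
    simp [Matrix.vecMul, dotProduct, Finset.sum_apply]
  suffices h : IsChirotope r (Fin n) (fun σ => sgn (F (w σ))) by
    convert h using 1
    funext σ
    simp only [hdet, sgn]
  refine ⟨hr, ?_, ?_, ?_, ?_, ?_, ?_, ?_⟩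
  · -- values
    intro σ
    unfold sgn
    split_ifs <;> simp
  · -- degenerate
    intro σ hinj
    rw [sgn_eq_zero_iff]
    obtain ⟨i, j, hval, hij⟩ := Function.not_injective_iff.1 hinj
    by_cases hb : (σ i).2 = (σ j).2
    · have heq : w σ i = w σ j := by simp [hw, phi, hval, hb]
      exact F.map_eq_zero_of_eq _ heq hij
    · have heq : w σ i = -(w σ j) := by
        cases hbi : (σ i).2 <;> cases hbj : (σ j).2
        · exact absurd (hbi.trans hbj.symm) hb
        · simp [hw, phi, hbi, hbj, hval]
        · simp [hw, phi, hbi, hbj, hval]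
        · exact absurd (hbi.trans hbj.symm) hb
      have h1 : F (w σ) = - F (Function.update (w σ) i (w σ j)) := by
        conv_lhs => rw [← Function.update_eq_self i (w σ)]
        rw [show w σ i = -(w σ j) from heq, hFneg]
      rw [h1, F.map_eq_zero_of_eq _ (i := i) (j := j) (by
        rw [Function.update_self, Function.update_of_ne (Ne.symm hij)]) hij, neg_zero]
  · -- c1
    intro e
    have hs : LinearIndepOn ℝ id ({v e} : Set (Fin r → ℝ)) :=
      (linearIndepOn_singleton_iff ℝ).2 (hv e)
    have hst : ({v e} : Set (Fin r → ℝ)) ⊆ Set.range v := Set.singleton_subset_iff.2 ⟨e, rfl⟩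
    have hBsub : hs.extend hst ⊆ Set.range v := hs.extend_subset hst
    have hBli : LinearIndependent ℝ (fun x => x : hs.extend hst → (Fin r → ℝ)) :=
      hs.linearIndepOn_extend hst
    have hBspan : ⊤ ≤ Submodule.span ℝ
        (Set.range (fun x => (x : Fin r → ℝ) : hs.extend hst → (Fin r → ℝ))) := by
      rw [Subtype.range_coe, ← hspan]
      exact Submodule.span_le.2 (hs.subset_span_extend hst)
    let b : Module.Basis (hs.extend hst) ℝ (Fin r → ℝ) := Module.Basis.mk hBli hBspan
    let g : Fin r ≃ hs.extend hst := (Pi.basisFun ℝ (Fin r)).indexEquiv b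
    have hmem : v e ∈ hs.extend hst := hs.subset_extend hst rfl
    have hidx : ∀ i : Fin r, ∃ k : Fin n, v k = (g i : Fin r → ℝ) := fun i => hBsub (g i).2
    choose idx hidxeq using hidx
    set i₀ : Fin r := g.symm ⟨v e, hmem⟩ with hi₀
    refine ⟨fun i => if i = i₀ then e else idx i, ⟨i₀, if_pos rfl⟩, ?_⟩
    dsimp only
    rw [Ne, sgn_eq_zero_iff]
    have hwτ : w (fun i => ((if i = i₀ then e else idx i), true))
        = fun i => v (if i = i₀ then e else idx i) := by
      funext j; simp [hw, phi]
    have hvg : (fun i => v (if i = i₀ then e else idx i)) = fun i => ((b.reindex g.symm) i : Fin r → ℝ) := by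
      funext i
      by_cases hi : i = i₀
      · subst hi
        simp only [if_pos rfl, Module.Basis.reindex_apply, Equiv.symm_symm]
        rw [show b (g i₀) = ((g i₀ : Fin r → ℝ)) from Module.Basis.mk_apply hBli hBspan (g i₀), hi₀]
        simp
      · simp only [if_neg hi, Module.Basis.reindex_apply, Equiv.symm_symm]
        rw [show b (g i) = ((g i : Fin r → ℝ)) from Module.Basis.mk_apply hBli hBspan (g i)]
        exact hidxeq i
    have hli : LinearIndependent ℝ (fun i => v (if i = i₀ then e else idx i)) := by
      rw [hvg]; exact (b.reindex g.symm).linearIndependent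
    have hUnit : IsUnit (Matrix.of fun i => v (if i = i₀ then e else idx i)) :=
      Matrix.linearIndependent_rows_iff_isUnit.1 hli
    have hdetne : Matrix.det (Matrix.of fun i => v (if i = i₀ then e else idx i)) ≠ 0 :=
      ((Matrix.isUnit_iff_isUnit_det _).1 hUnit).ne_zero
    rw [hwτ, hFmat]
    exact hdetne
  · -- c2neg
    intro σ i _
    rw [hupd, show phi v (bar (σ i)) = -(w σ i) from phi_bar v (σ i)]
    have h1 : F (Function.update (w σ) i (-(w σ i))) = - F (w σ) := by
      rw [hFneg, Function.update_eq_self]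
    rw [h1, sgn_neg]
  · -- c2swap
    intro σ i j hji
    have hij : i ≠ j := by
      intro h; subst h; omega
    have h1 : w (fun m => if m = i then bar (σ j) else if m = j then σ i else σ m)
        = Function.update (w σ ∘ Equiv.swap i j) i (-(w σ j)) := by
      funext m
      by_cases h1 : m = i
      · subst h1
        simp [hw, phi_bar, Function.update_self]
      · by_cases h2 : m = j
        · subst h2
          simp [hw, Function.update_of_ne (Ne.symm hij), Equiv.swap_apply_right, hij, Ne.symm hij]
        · simp [hw, Function.update_of_ne h1, Equiv.swap_apply_of_ne_of_ne h1 h2, h1, h2]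
    rw [h1]
    have hswapi : (w σ ∘ Equiv.swap i j) i = w σ j := by simp
    have h2 : F (Function.update (w σ ∘ Equiv.swap i j) i (-(w σ j))) = F (w σ) := by
      rw [← hswapi, hFneg, Function.update_eq_self, F.map_swap (w σ) hij]
      ring
    rw [h2]
  · -- c3
    intro σ τ hσ hτ
    by_contra hcon
    push_neg at hcon
    have hσ0 : F (w σ) ≠ 0 := by
      intro h0
      exact hσ (sgn_eq_zero_iff.2 h0)
    have hτ0 : F (w τ) ≠ 0 := by
      intro h0
      exact hτ (sgn_eq_zero_iff.2 h0)
    set p : Fin r := ⟨r - 1, Nat.sub_lt hr one_pos⟩ with hp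
    have hz : ∀ i, F (Function.update (w σ) p (w τ i)) = 0 := by
      intro i
      have := hcon i
      rw [sgn_eq_zero_iff, hupd] at this
      exact this
    obtain ⟨cz, hcz⟩ := hsolve (w τ) hτ0 (w σ p)
    apply hσ0
    conv_lhs => rw [← Function.update_eq_self p (w σ)]
    rw [hFexp (w σ) p (w σ p) cz (w τ) hcz]
    exact Finset.sum_eq_zero fun m _ => by rw [hz m, mul_zero]
  · -- c4
    intro σ y₁ y₂ hyp1 hyp2
    set p : Fin r := ⟨r - 2, Nat.sub_lt hr two_pos⟩ with hp
    set q : Fin r := ⟨r - 1, Nat.sub_lt hr one_pos⟩ with hq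
    set W : Fin r → Fin r → ℝ := w σ with hW
    set c : Fin r → ℝ := phi v y₁ with hc
    set d : Fin r → ℝ := phi v y₂ with hd
    rw [hupd, hupd] at hyp1
    rw [hupd, hupd, phi_bar] at hyp2
    rw [hupd, hupd]
    rcases lt_or_ge r 2 with hr2 | hr2
    · -- r = 1 : all determinants are nonzero and the hypotheses are contradictory
      exfalso
      have hr1 : r = 1 := by omega
      subst hr1
      have hv0 : ∀ k, v k 0 ≠ 0 := by
        intro k h0
        exact hv k (funext fun j => by rw [Subsingleton.elim j 0]; exact h0)
      have hDne : ∀ z : Fin n × Bool, F (Function.update W q (phi v z)) ≠ 0 := by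
        intro z
        have h1 : Function.update W q (phi v z) = fun _ => phi v z := by
          funext m; rw [Subsingleton.elim m q]; simp
        rw [h1, hFmat, Matrix.det_fin_one]
        rcases z with ⟨k, bb⟩
        cases bb <;> simp [phi, hv0 k]
      have hpq : p = q := Subsingleton.elim p q
      rw [hpq] at hyp1 hyp2
      set A := sgn (F (Function.update W q c)) with hA
      set B := sgn (F (Function.update W q d)) with hB
      have hAB : 0 ≤ A * B := hyp1
      have hBA : 0 ≤ B * (-A) := by
        rw [hFneg, sgn_neg] at hyp2
        exact hyp2
      have hA0 : A ≠ 0 := fun h => hDne y₁ (sgn_eq_zero_iff.1 h)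
      have hB0 : B ≠ 0 := fun h => hDne y₂ (sgn_eq_zero_iff.1 h)
      have : A * B = 0 := by
        have hx : B * -A = -(A * B) := by ring
        omega
      rcases mul_eq_zero.1 this with h | h
      · exact hA0 h
      · exact hB0 h
    · -- r ≥ 2 : the three-term Grassmann–Plücker relation
      have hpq : p ≠ q := by
        intro h
        rw [Fin.ext_iff] at h
        simp only [hp, hq] at h
        omega
      rcases eq_or_ne (F W) 0 with hK | hK
      · rw [hK, sgn_eq_zero_iff.2 rfl, zero_mul]
      -- expansion coefficients for c and d
      obtain ⟨γ, hγ⟩ := hsolve W hK c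
      obtain ⟨δ, hδ⟩ := hsolve W hK d
      set K := F W with hKdef
      -- a generic expansion: updates of W away from p,q
      have expand : ∀ (Y : Fin r → Fin r → ℝ) (k : Fin r),
          (∀ m, m ≠ p → m ≠ q → Y m = W m) → (k = p ∨ k = q) →
          ∀ (z cz : Fin r → ℝ), z = ∑ m, cz m • W m →
          F (Function.update Y k z)
            = cz p * F (Function.update Y k (W p)) + cz q * F (Function.update Y k (W q)) := by
        intro Y k hY hk z cz hz
        rw [hFexp Y k z cz W hz]
        rw [show (Finset.univ : Finset (Fin r)) = insert p (insert q (Finset.univ \ {p, q})) from ?uni]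
        case uni =>
          ext m
          by_cases h1 : m = p
          · simp [h1]
          · by_cases h2 : m = q
            · simp [h2]
            · simp [h1, h2]
        rw [Finset.sum_insert (by simp [hpq]), Finset.sum_insert (by simp)]
        have hrest : ∑ m ∈ Finset.univ \ {p, q}, cz m * F (Function.update Y k (W m)) = 0 := by
          refine Finset.sum_eq_zero fun m hm => ?_
          simp only [Finset.mem_sdiff, Finset.mem_univ, Finset.mem_insert,
            Finset.mem_singleton, true_and, not_or] at hm
          obtain ⟨hm1, hm2⟩ := hm
          have hkm : k ≠ m := by rcases hk with rfl | rfl; exacts [Ne.symm hm1, Ne.symm hm2]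
          have : F (Function.update Y k (W m)) = 0 := by
            refine F.map_eq_zero_of_eq _ (i := k) (j := m) ?_ hkm
            rw [Function.update_self, Function.update_of_ne (Ne.symm hkm), hY m hm1 hm2]
          rw [this, mul_zero]
        rw [hrest, add_zero]
      have hYW : ∀ m : Fin r, m ≠ p → m ≠ q → W m = W m := fun _ _ _ => rfl
      have hWpq : (Function.update W p (W p)) = W := Function.update_eq_self p W
      -- F (update W p (W q)) = 0 : rows p and q are equal
      have hzero1 : F (Function.update W p (W q)) = 0 := by
        refine F.map_eq_zero_of_eq _ (i := p) (j := q) ?_ hpq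
        rw [Function.update_self, Function.update_of_ne (Ne.symm hpq)]
      have hzero2 : F (Function.update W q (W p)) = 0 := by
        refine F.map_eq_zero_of_eq _ (i := q) (j := p) ?_ (Ne.symm hpq)
        rw [Function.update_self, Function.update_of_ne hpq]
      have hWq : F (Function.update W q (W q)) = K := by rw [Function.update_eq_self]
      have hWp : F (Function.update W p (W p)) = K := by rw [Function.update_eq_self]
      -- the five basic values
      have hAcb : F (Function.update W p c) = γ p * K := by
        rw [expand W p hYW (Or.inl rfl) c γ hγ, hWp, hzero1, mul_zero, add_zero]
      have hAac : F (Function.update W q c) = γ q * K := by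
        rw [expand W q hYW (Or.inr rfl) c γ hγ, hWq, hzero2, mul_zero, zero_add]
      have hAdb : F (Function.update W p d) = δ p * K := by
        rw [expand W p hYW (Or.inl rfl) d δ hδ, hWp, hzero1, mul_zero, add_zero]
      have hAad : F (Function.update W q d) = δ q * K := by
        rw [expand W q hYW (Or.inr rfl) d δ hδ, hWq, hzero2, mul_zero, zero_add]
      -- F (update (update W p c) q (W p)) = γ q * (-K)
      have hswap : F (Function.update (Function.update W q (W p)) p (W q)) = -K := by
        have hfam : Function.update (Function.update W q (W p)) p (W q)
            = W ∘ Equiv.swap p q := by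
          funext m
          by_cases h1 : m = p
          · subst h1; simp [Function.update_self, Equiv.swap_apply_left]
          · by_cases h2 : m = q
            · subst h2
              simp [Function.update_of_ne h1, Function.update_self, Equiv.swap_apply_right]
            · simp [Function.update_of_ne h1, Function.update_of_ne h2,
                Equiv.swap_apply_of_ne_of_ne h1 h2]
        rw [hfam, F.map_swap W hpq]
      have hca : F (Function.update (Function.update W p c) q (W p)) = γ q * (-K) := by
        rw [Function.update_comm hpq]
        have hY : ∀ m : Fin r, m ≠ p → m ≠ q → Function.update W q (W p) m = W m :=
          fun m _ h2 => Function.update_of_ne h2 _ _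
        rw [expand (Function.update W q (W p)) p hY (Or.inl rfl) c γ hγ]
        have h1 : Function.update (Function.update W q (W p)) p (W p) = Function.update W q (W p) := by
          funext m
          by_cases hm : m = p
          · subst hm; rw [Function.update_self, Function.update_of_ne hpq]
          · rw [Function.update_of_ne hm]
        rw [h1, hzero2, mul_zero, zero_add, hswap]
      have hcb : F (Function.update (Function.update W p c) q (W q)) = γ p * K := by
        rw [show W q = (Function.update W p c) q from (Function.update_of_ne (Ne.symm hpq) _ _).symm,
          Function.update_eq_self, hAcb]
      -- the target value
      have htarget : F (Function.update (Function.update W p c) q d)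
          = δ p * (γ q * (-K)) + δ q * (γ p * K) := by
        have hY : ∀ m : Fin r, m ≠ p → m ≠ q → Function.update W p c m = W m :=
          fun m h1 _ => Function.update_of_ne h1 _ _
        rw [expand (Function.update W p c) q hY (Or.inr rfl) d δ hδ, hca, hcb]
      -- put the inequalities together
      rw [sgn_mul_nonneg] at hyp1 ⊢
      rw [hFneg, sgn_neg] at hyp2
      have hyp2' : 0 ≤ F (Function.update W p d) * (- F (Function.update W q c)) := by
        rw [← sgn_mul_nonneg, sgn_neg]
        exact hyp2
      rw [hAcb, hAad] at hyp1
      rw [hAdb, hAac] at hyp2'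
      have hfin : K * (δ p * (γ q * (-K)) + δ q * (γ p * K))
          = γ p * K * (δ q * K) + δ p * K * (-(γ q * K)) := by ring
      rw [htarget, hfin]
      exact add_nonneg hyp1 hyp2'
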